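/- For a differential-drive robot with wheel-speed bound w_max > 0 and half-axle length ρ > 0, starting from any configuration g = (p, θ₀) ∈ ℝ² × ℝ, the area of the small-time reachable set satisfies limsup_{t→0⁺} Area(R_t(g)) / t³ ≤ (5/(6ρ)) w_max³. -/

import Mathlib

open MeasureTheory Filter Topology Real

noncomputable section

/-- The plane `ℝ²` with the Euclidean norm. -/
abbrev Plane : Type := EuclideanSpace ℝ (Fin 2)

/-- A differential-drive (DD) trajectory with wheel-speed bound `wmax` and half-axle
length `ρ`: coordinates `x y θ` driven by measurable wheel-speed controls `wl, wr`
bounded by `wmax`, satisfying (in integral form) `x' = (wl+wr)/2 ⬝ cos θ`,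
`y' = (wl+wr)/2 ⬝ sin θ`, `θ' = (wr - wl)/(2ρ)`. -/
def IsDDTraj (wmax ρ : ℝ) (x y θ : ℝ → ℝ) : Prop :=
  ∃ wl wr : ℝ → ℝ, Measurable wl ∧ Measurable wr ∧
    (∀ t, |wl t| ≤ wmax) ∧ (∀ t, |wr t| ≤ wmax) ∧
    (∀ t, x t = x 0 + ∫ s in (0:ℝ)..t, (wl s + wr s) / 2 * Real.cos (θ s)) ∧
    (∀ t, y t = y 0 + ∫ s in (0:ℝ)..t, (wl s + wr s) / 2 * Real.sin (θ s)) ∧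
    (∀ t, θ t = θ 0 + ∫ s in (0:ℝ)..t, (wr s - wl s) / (2 * ρ))

/-- Minimum travel time of a DD robot from configuration `(p, θ₀)` to the point `q`. -/
def tauDD (wmax ρ : ℝ) (p : Plane) (θ₀ : ℝ) (q : Plane) : ℝ :=
  sInf {T : ℝ | 0 ≤ T ∧ ∃ x y θ : ℝ → ℝ, IsDDTraj wmax ρ x y θ ∧
    x 0 = p 0 ∧ y 0 = p 1 ∧ θ 0 = θ₀ ∧ x T = q 0 ∧ y T = q 1}

/-- Reachable set at time `t` of a DD robot starting at configuration `(p, θ₀)`. -/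
def reachDD (wmax ρ : ℝ) (p : Plane) (θ₀ : ℝ) (t : ℝ) : Set Plane :=
  {q | tauDD wmax ρ p θ₀ q ≤ t}

namespace DDHelp

lemma bdd_intInt {f : ℝ → ℝ} {C : ℝ} (hf : Measurable f) (hC : ∀ s, |f s| ≤ C) (a b : ℝ) :
    IntervalIntegrable f volume a b := by
  apply IntervalIntegrable.mono_fun' (g := fun _ => C) intervalIntegrable_const
    hf.aestronglyMeasurable.restrict
  filter_upwards with s
  simpa [Real.norm_eq_abs] using hC s

lemma int_const_on {a b c : ℝ} (hab : a ≤ b) {s : Set ℝ} (h : Set.Ioc a b ⊆ s) :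
    ∫ u in a..b, Set.indicator s (fun _ => c) u = c * (b - a) := by
  rw [intervalIntegral.integral_of_le hab]
  rw [MeasureTheory.setIntegral_congr_fun measurableSet_Ioc
    (g := fun _ => c) (fun u hu => Set.indicator_of_mem (h hu) _)]
  simp [Real.volume_Ioc, ENNReal.toReal_ofReal (by linarith : (0:ℝ) ≤ b - a)]
  rw [max_eq_left (by linarith : (0:ℝ) ≤ b - a)]
  ring

lemma int_zero_on {a b c : ℝ} (hab : a ≤ b) {s : Set ℝ} (h : ∀ u ∈ Set.Ioc a b, u ∉ s) :
    ∫ u in a..b, Set.indicator s (fun _ => c) u = 0 := by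
  rw [intervalIntegral.integral_of_le hab]
  rw [MeasureTheory.setIntegral_congr_fun measurableSet_Ioc
    (g := fun _ => (0:ℝ)) (fun u hu => Set.indicator_of_notMem (h u hu) _)]
  simp

lemma indic_intInt (a b c : ℝ) (u v : ℝ) :
    IntervalIntegrable (Set.indicator (Set.Ioc a b) (fun _ => c)) volume u v := by
  apply bdd_intInt (measurable_const.indicator measurableSet_Ioc) (C := |c|)
  intro s
  rw [Set.indicator_apply]
  split <;> simp

lemma int_indicator_Ioc {a b : ℝ} (c : ℝ) (h0 : 0 ≤ a) (hab : a ≤ b) (t : ℝ) :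
    ∫ s in (0:ℝ)..t, Set.indicator (Set.Ioc a b) (fun _ => c) s
      = c * (min (max t a) b - a) := by
  rcases le_or_gt t a with hta | hat
  · have hmin : min (max t a) b = a := by
      rw [max_eq_right hta, min_eq_left hab]
    rw [hmin, sub_self, mul_zero]
    rcases le_or_gt 0 t with h0t | ht0
    · exact int_zero_on h0t (fun u hu hmem => absurd hmem.1 (by linarith [hu.2]))
    · rw [intervalIntegral.integral_symm]
      rw [int_zero_on ht0.le (fun u hu hmem => absurd hmem.1 (by linarith [hu.2]))]
      simp
  · have h0t : (0:ℝ) ≤ t := le_of_lt (lt_of_le_of_lt h0 hat)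
    rw [← intervalIntegral.integral_add_adjacent_intervals (b := a)
      (indic_intInt a b c 0 a) (indic_intInt a b c a t)]
    rw [int_zero_on h0 (fun u hu hmem => absurd hmem.1 (by linarith [hu.2])), zero_add]
    rcases le_or_gt t b with htb | hbt
    · rw [int_const_on hat.le (fun u hu => Set.mem_of_mem_of_subset hu
        (Set.Ioc_subset_Ioc_right htb))]
      rw [max_eq_left hat.le, min_eq_left htb]
    · rw [← intervalIntegral.integral_add_adjacent_intervals (b := b)
        (indic_intInt a b c a b) (indic_intInt a b c b t)]
      rw [int_const_on hab (fun u hu => hu)]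
      rw [int_zero_on hbt.le (fun u hu hmem => absurd hmem.2 (by linarith [hu.1]))]
      rw [max_eq_left hat.le, min_eq_right hbt.le, add_zero]

lemma exists_angle (dx dy : ℝ) :
    ∃ φ : ℝ, Real.cos φ * Real.sqrt (dx^2 + dy^2) = dx ∧
             Real.sin φ * Real.sqrt (dx^2 + dy^2) = dy := by
  by_cases h : dx = 0 ∧ dy = 0
  · exact ⟨0, by simp [h.1, h.2]⟩
  · have hz : (⟨dx, dy⟩ : ℂ) ≠ 0 := by
      simp only [ne_eq, Complex.ext_iff, Complex.zero_re, Complex.zero_im]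
      tauto
    have habs : ‖(⟨dx, dy⟩ : ℂ)‖ = Real.sqrt (dx^2 + dy^2) := by
      rw [Complex.norm_def, Complex.normSq_mk]; ring_nf
    refine ⟨Complex.arg ⟨dx, dy⟩, ?_, ?_⟩
    all_goals
      have hne : Real.sqrt (dx^2+dy^2) ≠ 0 := by
        rw [← habs]; simpa using hz
    · rw [Complex.cos_arg hz, habs]
      field_simp
    · rw [Complex.sin_arg, habs]
      field_simp

lemma reach_set_nonempty (wmax ρ : ℝ) (hw : 0 < wmax) (hρ : 0 < ρ) (p : Plane) (θ₀ : ℝ)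
    (q : Plane) :
    Set.Nonempty {T : ℝ | 0 ≤ T ∧ ∃ x y θ : ℝ → ℝ, IsDDTraj wmax ρ x y θ ∧
      x 0 = p 0 ∧ y 0 = p 1 ∧ θ 0 = θ₀ ∧ x T = q 0 ∧ y T = q 1} := by
  obtain ⟨φ, hcos, hsin⟩ := exists_angle (q 0 - p 0) (q 1 - p 1)
  set d := Real.sqrt ((q 0 - p 0)^2 + (q 1 - p 1)^2) with hd
  have hd0 : 0 ≤ d := Real.sqrt_nonneg _
  set t₁ := ρ * (|φ - θ₀| + 1) / wmax with ht₁def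
  have ht₁ : 0 < t₁ := by positivity
  set T := t₁ + d / wmax with hTdef
  have hT1 : t₁ ≤ T := le_add_of_nonneg_right (div_nonneg hd0 hw.le)
  set ω₀ := (φ - θ₀) / t₁ with hω₀def
  have hωt : ω₀ * t₁ = φ - θ₀ := div_mul_cancel₀ _ ht₁.ne'
  have hρω : |ρ * ω₀| ≤ wmax := by
    have h1 : wmax * t₁ = ρ * (|φ - θ₀| + 1) := by
      rw [ht₁def]; field_simp
    have h2 : |ρ * ω₀| = ρ * |φ - θ₀| / t₁ := by
      rw [hω₀def, ← mul_div_assoc, abs_div, abs_mul, abs_of_pos hρ, abs_of_pos ht₁]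
    rw [h2, div_le_iff₀ ht₁]
    nlinarith [abs_nonneg (φ - θ₀)]
  classical
  set wl := fun s : ℝ => Set.indicator (Set.Ioc 0 t₁) (fun _ => -(ρ*ω₀)) s
      + Set.indicator (Set.Ioc t₁ T) (fun _ => wmax) s with hwl
  set wr := fun s : ℝ => Set.indicator (Set.Ioc 0 t₁) (fun _ => (ρ*ω₀)) s
      + Set.indicator (Set.Ioc t₁ T) (fun _ => wmax) s with hwr
  set θf := fun t : ℝ => θ₀ + ω₀ * (min (max t 0) t₁ - 0) with hθf
  set xf := fun t : ℝ => p 0 + (wmax * Real.cos φ) * (min (max t t₁) T - t₁) with hxf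
  set yf := fun t : ℝ => p 1 + (wmax * Real.sin φ) * (min (max t t₁) T - t₁) with hyf
  have hmax0 : min (max (0:ℝ) t₁) T = t₁ := by rw [max_eq_right ht₁.le, min_eq_left hT1]
  have hθf0 : θf 0 = θ₀ := by simp [hθf, max_self, min_eq_left ht₁.le]
  have hxf0 : xf 0 = p 0 := by rw [hxf]; simp only [hmax0]; ring
  have hyf0 : yf 0 = p 1 := by rw [hyf]; simp only [hmax0]; ring
  have hθmid : ∀ s, s ∈ Set.Ioc t₁ T → θf s = φ := by
    intro s hs
    have h1 : max s 0 = s := max_eq_left (le_of_lt (lt_of_le_of_lt ht₁.le hs.1))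
    have h2 : min s t₁ = t₁ := min_eq_right hs.1.le
    simp only [hθf, h1, h2, sub_zero]
    rw [hωt]; ring
  refine ⟨T, le_trans ht₁.le hT1, xf, yf, θf,
    ⟨wl, wr, ?_, ?_, ?_, ?_, ?_, ?_, ?_⟩, hxf0, hyf0, hθf0, ?_, ?_⟩
  · exact (measurable_const.indicator measurableSet_Ioc).add
      (measurable_const.indicator measurableSet_Ioc)
  · exact (measurable_const.indicator measurableSet_Ioc).add
      (measurable_const.indicator measurableSet_Ioc)
  · intro s
    rw [hwl]
    by_cases h1 : s ∈ Set.Ioc 0 t₁ <;> by_cases h2 : s ∈ Set.Ioc t₁ T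
    · exact absurd h2.1 (by linarith [h1.2])
    · simp only [Set.indicator_of_mem h1, Set.indicator_of_notMem h2, add_zero, abs_neg]
      exact hρω
    · simp only [Set.indicator_of_notMem h1, Set.indicator_of_mem h2, zero_add]
      rw [abs_of_pos hw]
    · simp only [Set.indicator_of_notMem h1, Set.indicator_of_notMem h2, add_zero]
      simp [hw.le]
  · intro s
    rw [hwr]
    by_cases h1 : s ∈ Set.Ioc 0 t₁ <;> by_cases h2 : s ∈ Set.Ioc t₁ T
    · exact absurd h2.1 (by linarith [h1.2])
    · simp only [Set.indicator_of_mem h1, Set.indicator_of_notMem h2, add_zero]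
      exact hρω
    · simp only [Set.indicator_of_notMem h1, Set.indicator_of_mem h2, zero_add]
      rw [abs_of_pos hw]
    · simp only [Set.indicator_of_notMem h1, Set.indicator_of_notMem h2, add_zero]
      simp [hw.le]
  · -- x identity
    intro t
    have hint : (fun s => (wl s + wr s) / 2 * Real.cos (θf s))
        = Set.indicator (Set.Ioc t₁ T) (fun _ => wmax * Real.cos φ) := by
      funext s
      by_cases h1 : s ∈ Set.Ioc 0 t₁ <;> by_cases h2 : s ∈ Set.Ioc t₁ T
      · exact absurd h2.1 (by linarith [h1.2])
      · simp only [hwl, hwr, Set.indicator_of_mem h1, Set.indicator_of_notMem h2, add_zero]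
        ring
      · simp only [hwl, hwr, Set.indicator_of_notMem h1, Set.indicator_of_mem h2, zero_add,
          hθmid s h2]
        ring
      · simp only [hwl, hwr, Set.indicator_of_notMem h1, Set.indicator_of_notMem h2, add_zero]
        ring
    rw [hint, int_indicator_Ioc _ ht₁.le hT1 t, hxf0, hxf]
  · -- y identity
    intro t
    have hint : (fun s => (wl s + wr s) / 2 * Real.sin (θf s))
        = Set.indicator (Set.Ioc t₁ T) (fun _ => wmax * Real.sin φ) := by
      funext s
      by_cases h1 : s ∈ Set.Ioc 0 t₁ <;> by_cases h2 : s ∈ Set.Ioc t₁ T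
      · exact absurd h2.1 (by linarith [h1.2])
      · simp only [hwl, hwr, Set.indicator_of_mem h1, Set.indicator_of_notMem h2, add_zero]
        ring
      · simp only [hwl, hwr, Set.indicator_of_notMem h1, Set.indicator_of_mem h2, zero_add,
          hθmid s h2]
        ring
      · simp only [hwl, hwr, Set.indicator_of_notMem h1, Set.indicator_of_notMem h2, add_zero]
        ring
    rw [hint, int_indicator_Ioc _ ht₁.le hT1 t, hyf0, hyf]
  · -- θ identity
    intro t
    have hint : (fun s => (wr s - wl s) / (2 * ρ))
        = Set.indicator (Set.Ioc 0 t₁) (fun _ => ω₀) := by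
      funext s
      by_cases h1 : s ∈ Set.Ioc 0 t₁ <;> by_cases h2 : s ∈ Set.Ioc t₁ T
      · exact absurd h2.1 (by linarith [h1.2])
      · simp only [hwl, hwr, Set.indicator_of_mem h1, Set.indicator_of_notMem h2, add_zero]
        field_simp
        ring
      · simp only [hwl, hwr, Set.indicator_of_notMem h1, Set.indicator_of_mem h2, zero_add]
        simp
      · simp only [hwl, hwr, Set.indicator_of_notMem h1, Set.indicator_of_notMem h2, add_zero]
        simp
    rw [hint, int_indicator_Ioc _ le_rfl ht₁.le t, hθf0, hθf]
  · -- x T = q 0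
    simp only [hxf]
    rw [max_eq_left hT1, min_self, hTdef]
    have h3 : wmax * Real.cos φ * (t₁ + d / wmax - t₁) = Real.cos φ * d := by
      field_simp; ring
    rw [h3, hcos]; ring
  · -- y T = q 1
    simp only [hyf]
    rw [max_eq_left hT1, min_self, hTdef]
    have h3 : wmax * Real.sin φ * (t₁ + d / wmax - t₁) = Real.sin φ * d := by
      field_simp; ring
    rw [h3, hsin]; ring

lemma key_region {a b r ρ Y : ℝ} (X : ℝ) (ha : 0 ≤ a) (hb : 0 ≤ b) (hab : a + b ≤ r)
    (hX : |X| ≤ a) (hY : ρ * |Y| ≤ a * b) :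
    ρ * |Y| ≤ r^2/4 - max (|X| - r/2) 0 ^ 2 := by
  rcases le_total (|X|) (r/2) with h | h
  · rw [max_eq_right (by linarith)]
    nlinarith [sq_nonneg (a - b), mul_nonneg (by linarith : (0:ℝ) ≤ r - a - b)
      (by linarith : (0:ℝ) ≤ r + a + b)]
  · rw [max_eq_left (by linarith)]
    nlinarith [mul_nonneg (sub_nonneg.mpr hX) (by linarith : 0 ≤ a + |X| - r),
      mul_nonneg ha (by linarith : 0 ≤ r - a - b), abs_nonneg X]

lemma rhs_mono {X r r' : ℝ} (h : r ≤ r') (hr : 0 ≤ r) :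
    r^2/4 - max (|X| - r/2) 0 ^ 2 ≤ r'^2/4 - max (|X| - r'/2) 0 ^ 2 := by
  rcases le_total (|X|) (r'/2) with h2 | h2
  · rw [max_eq_right (by linarith : |X| - r'/2 ≤ (0:ℝ))]
    nlinarith [sq_nonneg (max (|X| - r/2) 0), le_max_right (|X| - r/2) (0:ℝ)]
  · rw [max_eq_left (by linarith : (0:ℝ) ≤ |X| - r'/2),
      max_eq_left (by linarith : (0:ℝ) ≤ |X| - r/2)]
    nlinarith [abs_nonneg X]

/-- the main per-trajectory bound -/
lemma traj_bound {wmax ρ : ℝ} (hw : 0 < wmax) (hρ : 0 < ρ)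
    {x y θ : ℝ → ℝ} (h : IsDDTraj wmax ρ x y θ) {T : ℝ} (hT : 0 ≤ T) :
    ρ * |(-Real.sin (θ 0)) * (x T - x 0) + Real.cos (θ 0) * (y T - y 0)|
      ≤ (wmax*T)^2/4
        - max (|Real.cos (θ 0) * (x T - x 0) + Real.sin (θ 0) * (y T - y 0)| - wmax*T/2) 0 ^ 2 := by
  obtain ⟨wl, wr, hml, hmr, hbl, hbr, hx, hy, hθ⟩ := h
  have hvb : ∀ s, |(wl s + wr s) / 2| ≤ wmax := by
    intro s
    have h1 := abs_le.mp (hbl s); have h2 := abs_le.mp (hbr s)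
    rw [abs_div, abs_two, div_le_iff₀ (by norm_num : (0:ℝ) < 2)]
    rcases abs_cases (wl s + wr s) with ⟨he, _⟩ | ⟨he, _⟩ <;> linarith
  have hωb : ∀ s, |(wr s - wl s) / (2 * ρ)| ≤ wmax / ρ := by
    intro s
    have h1 := abs_le.mp (hbl s); have h2 := abs_le.mp (hbr s)
    rw [abs_div, abs_of_pos (by positivity : (0:ℝ) < 2 * ρ),
      div_le_div_iff₀ (by positivity) hρ]
    rcases abs_cases (wr s - wl s) with ⟨he, _⟩ | ⟨he, _⟩ <;> nlinarith
  have hvω : ∀ s, |(wl s + wr s) / 2| + ρ * |(wr s - wl s) / (2 * ρ)| ≤ wmax := by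
    intro s
    have h1 := abs_le.mp (hbl s); have h2 := abs_le.mp (hbr s)
    have e1 : ρ * |(wr s - wl s) / (2 * ρ)| = |wr s - wl s| / 2 := by
      rw [abs_div, abs_of_pos (by positivity : (0:ℝ) < 2 * ρ)]
      field_simp
    rw [e1, abs_div, abs_two]
    rcases abs_cases (wl s + wr s) with ⟨e2, _⟩ | ⟨e2, _⟩ <;>
      rcases abs_cases (wr s - wl s) with ⟨e3, _⟩ | ⟨e3, _⟩ <;> rw [e2, e3] <;> linarith
  have hmv : Measurable fun s => (wl s + wr s) / 2 := (hml.add hmr).div_const 2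
  have hmω : Measurable fun s => (wr s - wl s) / (2 * ρ) := (hmr.sub hml).div_const (2 * ρ)
  have hθc : Continuous θ := by
    have he : θ = fun t => θ 0 + ∫ s in (0:ℝ)..t, (wr s - wl s) / (2 * ρ) := funext hθ
    rw [he]
    exact continuous_const.add
      (intervalIntegral.continuous_primitive (fun a b => bdd_intInt hmω hωb a b) 0)
  set V := ∫ s in (0:ℝ)..T, |(wl s + wr s) / 2| with hV
  set Mω := ∫ s in (0:ℝ)..T, |(wr s - wl s) / (2 * ρ)| with hMω
  have hV0 : 0 ≤ V := intervalIntegral.integral_nonneg hT (fun u _ => abs_nonneg _)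
  have hMω0 : 0 ≤ Mω := intervalIntegral.integral_nonneg hT (fun u _ => abs_nonneg _)
  have hIv : IntervalIntegrable (fun s => |(wl s + wr s) / 2|) volume 0 T :=
    bdd_intInt hmv.abs (fun s => by rw [abs_abs]; exact hvb s) 0 T
  have hIω : ∀ u v : ℝ, IntervalIntegrable (fun s => |(wr s - wl s) / (2 * ρ)|) volume u v :=
    fun u v => bdd_intInt hmω.abs (fun s => by rw [abs_abs]; exact hωb s) u v
  have hsum : V + ρ * Mω ≤ wmax * T := by
    have e1 : V + ρ * Mω
        = ∫ s in (0:ℝ)..T, (|(wl s + wr s) / 2| + ρ * |(wr s - wl s) / (2 * ρ)|) := by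
      rw [hV, hMω, ← intervalIntegral.integral_const_mul,
        ← intervalIntegral.integral_add hIv ((hIω 0 T).const_mul ρ)]
    rw [e1]
    calc ∫ s in (0:ℝ)..T, (|(wl s + wr s) / 2| + ρ * |(wr s - wl s) / (2 * ρ)|)
        ≤ ∫ _ in (0:ℝ)..T, wmax :=
          intervalIntegral.integral_mono_on hT
            (hIv.add ((hIω 0 T).const_mul ρ)) intervalIntegrable_const
            (fun s _ => hvω s)
      _ = wmax * T := by simp [mul_comm]
  have habsθ : ∀ s ∈ Set.Icc (0:ℝ) T, |θ s - θ 0| ≤ Mω := by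
    intro s hs
    have e1 : θ s - θ 0 = ∫ u in (0:ℝ)..s, (wr u - wl u) / (2 * ρ) := by rw [hθ s]; ring
    rw [e1]
    calc |∫ u in (0:ℝ)..s, (wr u - wl u) / (2 * ρ)|
        ≤ ∫ u in (0:ℝ)..s, |(wr u - wl u) / (2 * ρ)| :=
          intervalIntegral.abs_integral_le_integral_abs hs.1
      _ ≤ Mω := by
          rw [hMω, ← intervalIntegral.integral_add_adjacent_intervals (hIω 0 s) (hIω s T)]
          have h2 : 0 ≤ ∫ u in s..T, |(wr u - wl u) / (2 * ρ)| :=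
            intervalIntegral.integral_nonneg hs.2 (fun u _ => abs_nonneg _)
          linarith
  have hInt1 : ∀ (c : ℝ) (f : ℝ → ℝ), Continuous f → (∀ u, |f u| ≤ 1) →
      IntervalIntegrable (fun s => c * ((wl s + wr s) / 2 * f (θ s))) volume 0 T := by
    intro c f hf hf1
    apply bdd_intInt (measurable_const.mul (hmv.mul (hf.measurable.comp hθc.measurable)))
      (C := |c| * wmax)
    intro s
    simp only [Pi.mul_apply, Function.comp_apply, Pi.sub_apply]
    rw [abs_mul, abs_mul]
    have h3 : |(wl s + wr s) / 2| * |f (θ s)| ≤ wmax :=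
      le_trans (mul_le_of_le_one_right (abs_nonneg _) (hf1 _)) (hvb s)
    exact mul_le_mul_of_nonneg_left h3 (abs_nonneg c)
  have hInt2 : ∀ f : ℝ → ℝ, Continuous f → (∀ u, |f u| ≤ 1) →
      IntervalIntegrable (fun s => (wl s + wr s) / 2 * f (θ s - θ 0)) volume 0 T := by
    intro f hf hf1
    apply bdd_intInt (hmv.mul (hf.measurable.comp (hθc.measurable.sub measurable_const)))
      (C := wmax)
    intro s
    simp only [Pi.mul_apply, Function.comp_apply, Pi.sub_apply]
    rw [abs_mul]
    have := hvb s; have := hf1 (θ s - θ 0)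
    nlinarith [abs_nonneg (f (θ s - θ 0)), abs_nonneg ((wl s + wr s)/2)]
  have hXeq : Real.cos (θ 0) * (x T - x 0) + Real.sin (θ 0) * (y T - y 0)
      = ∫ s in (0:ℝ)..T, (wl s + wr s) / 2 * Real.cos (θ s - θ 0) := by
    rw [hx T, hy T]
    simp only [add_sub_cancel_left]
    rw [← intervalIntegral.integral_const_mul, ← intervalIntegral.integral_const_mul,
      ← intervalIntegral.integral_add
        (hInt1 _ _ Real.continuous_cos (fun u => Real.abs_cos_le_one u))
        (hInt1 _ _ Real.continuous_sin (fun u => Real.abs_sin_le_one u))]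
    apply intervalIntegral.integral_congr
    intro s _
    simp only [Real.cos_sub]
    ring
  have hYeq : (-Real.sin (θ 0)) * (x T - x 0) + Real.cos (θ 0) * (y T - y 0)
      = ∫ s in (0:ℝ)..T, (wl s + wr s) / 2 * Real.sin (θ s - θ 0) := by
    rw [hx T, hy T]
    simp only [add_sub_cancel_left]
    rw [← intervalIntegral.integral_const_mul, ← intervalIntegral.integral_const_mul,
      ← intervalIntegral.integral_add
        (hInt1 _ _ Real.continuous_cos (fun u => Real.abs_cos_le_one u))
        (hInt1 _ _ Real.continuous_sin (fun u => Real.abs_sin_le_one u))]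
    apply intervalIntegral.integral_congr
    intro s _
    simp only [Real.sin_sub]
    ring
  have hXle : |Real.cos (θ 0) * (x T - x 0) + Real.sin (θ 0) * (y T - y 0)| ≤ V := by
    rw [hXeq]
    calc |∫ s in (0:ℝ)..T, (wl s + wr s) / 2 * Real.cos (θ s - θ 0)|
        ≤ ∫ s in (0:ℝ)..T, |(wl s + wr s) / 2 * Real.cos (θ s - θ 0)| :=
          intervalIntegral.abs_integral_le_integral_abs hT
      _ ≤ V := by
          rw [hV]
          apply intervalIntegral.integral_mono_on hT
            ((hInt2 _ Real.continuous_cos (fun u => Real.abs_cos_le_one u)).abs) hIv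
          intro s _
          rw [abs_mul]
          exact mul_le_of_le_one_right (abs_nonneg _) (Real.abs_cos_le_one _)
  have hYle : |(-Real.sin (θ 0)) * (x T - x 0) + Real.cos (θ 0) * (y T - y 0)| ≤ Mω * V := by
    rw [hYeq]
    calc |∫ s in (0:ℝ)..T, (wl s + wr s) / 2 * Real.sin (θ s - θ 0)|
        ≤ ∫ s in (0:ℝ)..T, |(wl s + wr s) / 2 * Real.sin (θ s - θ 0)| :=
          intervalIntegral.abs_integral_le_integral_abs hT
      _ ≤ ∫ s in (0:ℝ)..T, Mω * |(wl s + wr s) / 2| := by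
          apply intervalIntegral.integral_mono_on hT
            ((hInt2 _ Real.continuous_sin (fun u => Real.abs_sin_le_one u)).abs)
            (hIv.const_mul Mω)
          intro s hs
          rw [abs_mul]
          calc |(wl s + wr s) / 2| * |Real.sin (θ s - θ 0)|
              ≤ |(wl s + wr s) / 2| * Mω := by
                apply mul_le_mul_of_nonneg_left _ (abs_nonneg _)
                exact le_trans (Real.abs_sin_le_abs) (habsθ s hs)
            _ = Mω * |(wl s + wr s) / 2| := mul_comm _ _
      _ = Mω * V := by rw [hV, intervalIntegral.integral_const_mul]
  apply key_region (a := V) (b := ρ * Mω) _ hV0 (by positivity) hsum hXle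
  nlinarith [abs_nonneg ((-Real.sin (θ 0)) * (x T - x 0) + Real.cos (θ 0) * (y T - y 0))]



def rotMap (c s : ℝ) : Plane →ₗ[ℝ] Plane where
  toFun := fun v => (WithLp.equiv 2 (Fin 2 → ℝ)).symm ![c * v 0 + s * v 1, -(s * v 0) + c * v 1]
  map_add' := by
    intro v w
    apply (WithLp.equiv 2 (Fin 2 → ℝ)).injective
    funext i
    fin_cases i <;>
      simp [WithLp.equiv_symm_apply, PiLp.add_apply] <;> ring
  map_smul' := by
    intro a v
    apply (WithLp.equiv 2 (Fin 2 → ℝ)).injective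
    funext i
    fin_cases i <;>
      simp [WithLp.equiv_symm_apply, PiLp.smul_apply, smul_eq_mul] <;> ring

lemma rotMap_apply0 (c s : ℝ) (v : Plane) : rotMap c s v 0 = c * v 0 + s * v 1 := rfl
lemma rotMap_apply1 (c s : ℝ) (v : Plane) : rotMap c s v 1 = -(s * v 0) + c * v 1 := rfl

def rotLE (c s : ℝ) (h : c^2 + s^2 = 1) : Plane ≃ₗᵢ[ℝ] Plane where
  toLinearEquiv := LinearEquiv.ofLinear (rotMap c s) (rotMap c (-s))
    (by
      apply LinearMap.ext
      intro v
      apply (WithLp.equiv 2 (Fin 2 → ℝ)).injective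
      funext i
      have h0 := rotMap_apply0 c (-s) v
      have h1 := rotMap_apply1 c (-s) v
      fin_cases i
      · simp [LinearMap.comp_apply, rotMap_apply0, rotMap_apply1, h0, h1,
          WithLp.equiv_apply, LinearMap.id_apply]
        linear_combination (v 0) * h
      · simp [LinearMap.comp_apply, rotMap_apply0, rotMap_apply1, h0, h1,
          WithLp.equiv_apply, LinearMap.id_apply]
        linear_combination (v 1) * h)
    (by
      apply LinearMap.ext
      intro v
      apply (WithLp.equiv 2 (Fin 2 → ℝ)).injective
      funext i
      have h0 := rotMap_apply0 c s v
      have h1 := rotMap_apply1 c s v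
      fin_cases i
      · simp [LinearMap.comp_apply, rotMap_apply0, rotMap_apply1, h0, h1,
          WithLp.equiv_apply, LinearMap.id_apply]
        linear_combination (v 0) * h
      · simp [LinearMap.comp_apply, rotMap_apply0, rotMap_apply1, h0, h1,
          WithLp.equiv_apply, LinearMap.id_apply]
        linear_combination (v 1) * h)
  norm_map' := by
    intro v
    show ‖rotMap c s v‖ = ‖v‖
    rw [EuclideanSpace.norm_eq, EuclideanSpace.norm_eq, Fin.sum_univ_two, Fin.sum_univ_two,
      rotMap_apply0, rotMap_apply1]
    simp only [Real.norm_eq_abs, sq_abs]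
    congr 1
    linear_combination (v 0 ^ 2 + v 1 ^ 2) * h

lemma rotLE_apply0 (c s : ℝ) (h : c^2 + s^2 = 1) (v : Plane) :
    rotLE c s h v 0 = c * v 0 + s * v 1 := rfl
lemma rotLE_apply1 (c s : ℝ) (h : c^2 + s^2 = 1) (v : Plane) :
    rotLE c s h v 1 = -(s * v 0) + c * v 1 := rfl



def regionS (ρ r : ℝ) : Set Plane :=
  {v : Plane | ρ * |v 1| ≤ r^2/4 - max (|v 0| - r/2) 0 ^ 2}

lemma gcont (r : ℝ) : Continuous fun u : ℝ => r^2/4 - max (|u| - r/2) 0 ^ 2 :=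
  continuous_const.sub (((continuous_abs.sub continuous_const).max continuous_const).pow 2)

lemma regionS_measurable (ρ r : ℝ) : MeasurableSet (regionS ρ r) := by
  apply IsClosed.measurableSet
  apply isClosed_le
  · exact continuous_const.mul (continuous_abs.comp (EuclideanSpace.proj (1 : Fin 2)).continuous)
  · exact (gcont r).comp (EuclideanSpace.proj (0 : Fin 2)).continuous

lemma Hcont (ρ r : ℝ) : Continuous fun u : ℝ =>
    max (2 * (r^2/4 - max (|u| - r/2) 0 ^ 2) / ρ) 0 :=
  (((continuous_const.mul (gcont r)).div_const ρ).max continuous_const)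

lemma Hsupp {ρ r : ℝ} (hρ : 0 < ρ) (hr : 0 ≤ r) :
    ∀ u : ℝ, u ∉ Set.Icc (-r) r →
      max (2 * (r^2/4 - max (|u| - r/2) 0 ^ 2) / ρ) 0 = 0 := by
  intro u hu
  have hru : r < |u| := by
    rcases abs_cases u with ⟨he, _⟩ | ⟨he, _⟩ <;>
      (rw [Set.mem_Icc, not_and_or, not_le, not_le] at hu; rcases hu with h | h <;> linarith)
  have h1 : max (|u| - r/2) 0 = |u| - r/2 := max_eq_left (by linarith)
  apply max_eq_right
  apply div_nonpos_iff.mpr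
  refine Or.inr ⟨by rw [h1]; nlinarith, hρ.le⟩

lemma Hintegral {ρ r : ℝ} (hρ : 0 < ρ) (hr : 0 ≤ r) :
    ∫ u : ℝ, max (2 * (r^2/4 - max (|u| - r/2) 0 ^ 2) / ρ) 0 = 5 / (6*ρ) * r^3 := by
  set H := fun u : ℝ => max (2 * (r^2/4 - max (|u| - r/2) 0 ^ 2) / ρ) 0 with hH
  have hsupp : Function.support H ⊆ Set.Icc (-r) r := by
    intro u hu
    by_contra hn
    exact hu (Hsupp hρ hr u hn)
  have hIcc : ∫ u : ℝ, H u = ∫ u in (-r)..r, H u := by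
    calc ∫ u : ℝ, H u = ∫ u : ℝ, Set.indicator (Set.Icc (-r) r) H u := by
          rw [Set.indicator_eq_self.mpr hsupp]
      _ = ∫ u in Set.Icc (-r) r, H u := MeasureTheory.integral_indicator measurableSet_Icc
      _ = ∫ u in Set.Ioc (-r) r, H u := MeasureTheory.integral_Icc_eq_integral_Ioc
      _ = ∫ u in (-r)..r, H u := (intervalIntegral.integral_of_le (by linarith : -r ≤ r)).symm
  have hHint : ∀ a b : ℝ, IntervalIntegrable H volume a b :=
    fun a b => (Hcont ρ r).intervalIntegrable a b
  -- split
  have hsplit : ∫ u in (-r)..r, H u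
      = (∫ u in (-r)..(-r/2), H u) + (∫ u in (-r/2)..(r/2), H u) + (∫ u in (r/2)..r, H u) := by
    rw [intervalIntegral.integral_add_adjacent_intervals (hHint (-r) (-r/2)) (hHint (-r/2) (r/2)),
      intervalIntegral.integral_add_adjacent_intervals (hHint (-r) (r/2)) (hHint (r/2) r)]
  have hP2 : ∫ u in (-r/2)..(r/2), H u = r * (2 * (r^2/4) / ρ) := by
    rw [intervalIntegral.integral_congr (g := fun _ => 2 * (r^2/4) / ρ) ?_]
    · rw [intervalIntegral.integral_const]
      rw [smul_eq_mul]; ring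
    · intro u hu
      rw [Set.uIcc_of_le (by linarith : -r/2 ≤ r/2), Set.mem_Icc] at hu
      have h1 : |u| ≤ r/2 := abs_le.mpr ⟨by linarith [hu.1], hu.2⟩
      have h2 : max (|u| - r/2) 0 = 0 := max_eq_right (by linarith)
      simp only [hH, h2]
      rw [max_eq_left (div_nonneg (by nlinarith) hρ.le)]
      ring
  have hP3 : ∫ u in (r/2)..r, H u = r^3 / (6*ρ) := by
    rw [intervalIntegral.integral_congr
      (g := fun u => 2 * (r^2/4) / ρ - (2/ρ) * (u - r/2)^2) ?_]
    · rw [intervalIntegral.integral_sub (Continuous.intervalIntegrable (by fun_prop) _ _) (Continuous.intervalIntegrable (by fun_prop) _ _),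
        intervalIntegral.integral_const, intervalIntegral.integral_const_mul,
        intervalIntegral.integral_comp_sub_right (fun x => x^2) (r/2),
        integral_pow]
      rw [smul_eq_mul]
      field_simp
      ring
    · intro u hu
      rw [Set.uIcc_of_le (by linarith : r/2 ≤ r), Set.mem_Icc] at hu
      have h0 : |u| = u := abs_of_nonneg (by linarith [hu.1])
      have h2 : max (|u| - r/2) 0 = u - r/2 := by rw [h0]; exact max_eq_left (by linarith [hu.1])
      simp only [hH, h2]
      rw [max_eq_left (div_nonneg (by nlinarith [hu.1, hu.2]) hρ.le)]
      ring
  have hP1 : ∫ u in (-r)..(-r/2), H u = r^3 / (6*ρ) := by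
    rw [intervalIntegral.integral_congr
      (g := fun u => 2 * (r^2/4) / ρ - (2/ρ) * (u + r/2)^2) ?_]
    · rw [intervalIntegral.integral_sub (Continuous.intervalIntegrable (by fun_prop) _ _) (Continuous.intervalIntegrable (by fun_prop) _ _),
        intervalIntegral.integral_const, intervalIntegral.integral_const_mul,
        intervalIntegral.integral_comp_add_right (fun x => x^2) (r/2),
        integral_pow]
      rw [smul_eq_mul]
      field_simp
      ring
    · intro u hu
      rw [Set.uIcc_of_le (by linarith : -r ≤ -r/2), Set.mem_Icc] at hu
      have h0 : |u| = -u := abs_of_nonpos (by linarith [hu.2])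
      have h2 : max (|u| - r/2) 0 = -u - r/2 := by
        rw [h0]; exact max_eq_left (by linarith [hu.2])
      simp only [hH, h2]
      rw [max_eq_left (div_nonneg (by nlinarith [hu.1, hu.2]) hρ.le)]
      ring
  rw [hIcc, hsplit, hP1, hP2, hP3]
  field_simp
  ring

lemma volume_regionS {ρ r : ℝ} (hρ : 0 < ρ) (hr : 0 ≤ r) :
    volume (regionS ρ r) ≤ ENNReal.ofReal (5 / (6*ρ) * r^3) := by
  set S2 : Set (ℝ × ℝ) := {z | ρ * |z.2| ≤ r^2/4 - max (|z.1| - r/2) 0 ^ 2} with hS2def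
  have hS2 : MeasurableSet S2 :=
    (isClosed_le (continuous_const.mul (continuous_abs.comp continuous_snd))
      ((gcont r).comp continuous_fst)).measurableSet
  have hpre : regionS ρ r = ⇑(MeasurableEquiv.toLp 2 (Fin 2 → ℝ)).symm ⁻¹'
      (⇑(MeasurableEquiv.piFinTwo (fun _ : Fin 2 => ℝ)) ⁻¹' S2) := rfl
  rw [hpre,
    (EuclideanSpace.volume_preserving_symm_measurableEquiv_toLp (Fin 2)).measure_preimage
      (((MeasurableEquiv.piFinTwo _).measurable hS2).nullMeasurableSet),
    (MeasureTheory.volume_preserving_piFinTwo (fun _ : Fin 2 => ℝ)).measure_preimage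
      hS2.nullMeasurableSet]
  have hslice : ∀ u : ℝ, Prod.mk u ⁻¹' S2
      = Set.Icc (-((r^2/4 - max (|u| - r/2) 0 ^ 2)/ρ)) ((r^2/4 - max (|u| - r/2) 0 ^ 2)/ρ) := by
    intro u
    ext z
    simp only [hS2def, Set.mem_preimage, Set.mem_setOf_eq, Set.mem_Icc]
    constructor
    · intro hz
      apply abs_le.mp
      rw [le_div_iff₀ hρ]
      linarith [mul_comm ρ |z|]
    · intro hz
      have h1 := abs_le.mpr hz
      rw [le_div_iff₀ hρ] at h1
      linarith [mul_comm ρ |z|]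
  have hHi : Integrable (fun u : ℝ => max (2 * (r^2/4 - max (|u| - r/2) 0 ^ 2) / ρ) 0) :=
    (Hcont ρ r).integrable_of_hasCompactSupport
      (HasCompactSupport.intro isCompact_Icc (Hsupp hρ hr))
  calc volume S2 = ∫⁻ u : ℝ, volume (Prod.mk u ⁻¹' S2) := by
        rw [MeasureTheory.Measure.volume_eq_prod, MeasureTheory.Measure.prod_apply hS2]
    _ ≤ ∫⁻ u : ℝ, ENNReal.ofReal (max (2 * (r^2/4 - max (|u| - r/2) 0 ^ 2) / ρ) 0) := by
        refine MeasureTheory.lintegral_mono fun u => ?_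
        rw [hslice u, Real.volume_Icc]
        apply ENNReal.ofReal_le_ofReal
        exact le_trans (le_of_eq (by ring)) (le_max_left _ _)
    _ = ENNReal.ofReal (∫ u : ℝ, max (2 * (r^2/4 - max (|u| - r/2) 0 ^ 2) / ρ) 0) :=
        (MeasureTheory.ofReal_integral_eq_lintegral_ofReal hHi
          (Filter.Eventually.of_forall (fun u => le_max_right _ _))).symm
    _ = ENNReal.ofReal (5 / (6*ρ) * r^3) := by rw [Hintegral hρ hr]


lemma sin_cos_sq (θ₀ : ℝ) : Real.cos θ₀ ^ 2 + Real.sin θ₀ ^ 2 = 1 := by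
  rw [← Real.sin_sq_add_cos_sq θ₀]; ring

lemma volume_reach_le (wmax ρ : ℝ) (hw : 0 < wmax) (hρ : 0 < ρ) (p : Plane) (θ₀ : ℝ)
    {t : ℝ} (ht : 0 < t) :
    volume (reachDD wmax ρ p θ₀ t) ≤ ENNReal.ofReal (5 / (6*ρ) * (wmax * t)^3) := by
  set rot := rotLE (Real.cos θ₀) (Real.sin θ₀) (sin_cos_sq θ₀) with hrot
  have key : ∀ t', t < t' → reachDD wmax ρ p θ₀ t ⊆
      (fun q => rot (q - p)) ⁻¹' regionS ρ (wmax * t') := by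
    intro t' htt' q hq
    have hne := reach_set_nonempty wmax ρ hw hρ p θ₀ q
    have hbdd : BddBelow {T : ℝ | 0 ≤ T ∧ ∃ x y θ : ℝ → ℝ, IsDDTraj wmax ρ x y θ ∧
        x 0 = p 0 ∧ y 0 = p 1 ∧ θ 0 = θ₀ ∧ x T = q 0 ∧ y T = q 1} :=
      ⟨0, fun T hT => hT.1⟩
    have hlt : tauDD wmax ρ p θ₀ q < t' := lt_of_le_of_lt hq htt'
    rw [tauDD] at hlt
    obtain ⟨T, hTmem, hTt'⟩ := (csInf_lt_iff hbdd hne).mp hlt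
    obtain ⟨hT0, x, y, θf, htraj, hx0, hy0, hθ0, hxT, hyT⟩ := hTmem
    have hb := traj_bound hw hρ htraj hT0
    rw [hθ0, hx0, hy0, hxT, hyT] at hb
    have hmono := rhs_mono (X := Real.cos θ₀ * (q 0 - p 0) + Real.sin θ₀ * (q 1 - p 1))
      (mul_le_mul_of_nonneg_left hTt'.le hw.le) (mul_nonneg hw.le hT0)
    have hfin : ρ * |(-Real.sin θ₀) * (q 0 - p 0) + Real.cos θ₀ * (q 1 - p 1)|
        ≤ (wmax*t')^2/4
          - max (|Real.cos θ₀ * (q 0 - p 0) + Real.sin θ₀ * (q 1 - p 1)| - wmax*t'/2) 0 ^ 2 :=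
      le_trans hb hmono
    show rot (q - p) ∈ regionS ρ (wmax * t')
    have e0 : rot (q - p) 0 = Real.cos θ₀ * (q 0 - p 0) + Real.sin θ₀ * (q 1 - p 1) := by
      rw [hrot, rotLE_apply0]
      simp [PiLp.sub_apply]
    have e1 : rot (q - p) 1 = -(Real.sin θ₀ * (q 0 - p 0)) + Real.cos θ₀ * (q 1 - p 1) := by
      rw [hrot, rotLE_apply1]
      simp [PiLp.sub_apply]
    show ρ * |rot (q - p) 1| ≤ (wmax * t')^2/4 - max (|rot (q - p) 0| - (wmax * t')/2) 0 ^ 2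
    rw [e0, e1, ← neg_mul]
    exact hfin
  have hbound : ∀ t', t < t' →
      volume (reachDD wmax ρ p θ₀ t) ≤ ENNReal.ofReal (5 / (6*ρ) * (wmax * t')^3) := by
    intro t' htt'
    calc volume (reachDD wmax ρ p θ₀ t)
        ≤ volume ((fun q => rot (q - p)) ⁻¹' regionS ρ (wmax * t')) :=
          measure_mono (key t' htt')
      _ = volume (regionS ρ (wmax * t')) := by
          have hsplit : (fun q : Plane => rot (q - p)) ⁻¹' regionS ρ (wmax * t')
              = (fun q : Plane => -p + q) ⁻¹' (rot ⁻¹' regionS ρ (wmax * t')) := by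
            ext q
            simp [sub_eq_neg_add]
          rw [hsplit, measure_preimage_add volume (-p) _,
            rot.measurePreserving.measure_preimage
              (regionS_measurable ρ (wmax * t')).nullMeasurableSet]
      _ ≤ ENNReal.ofReal (5 / (6*ρ) * (wmax * t')^3) :=
          volume_regionS hρ (by nlinarith)
  have htends : Filter.Tendsto (fun t' : ℝ => ENNReal.ofReal (5 / (6*ρ) * (wmax * t')^3))
      (𝓝[>] t) (𝓝 (ENNReal.ofReal (5 / (6*ρ) * (wmax * t)^3))) := by
    apply Filter.Tendsto.comp (ENNReal.continuous_ofReal.tendsto _)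
    exact ((Continuous.tendsto (by fun_prop) t)).mono_left nhdsWithin_le_nhds
  exact ge_of_tendsto htends (eventually_nhdsWithin_of_forall (fun t' ht' => hbound t' ht'))

end DDHelp

/-- small-time upper bound on the area of the reachable set of a DD robot:
`limsup_{t→0⁺} Area(R_t(g)) / t³ ≤ (5/(6ρ)) w_max³`. -/
theorem dd_reachable_area_upper_bound
    (wmax ρ : ℝ) (hw : 0 < wmax) (hρ : 0 < ρ) (p : Plane) (θ₀ : ℝ) :
    Filter.limsup
      (fun t : ℝ => volume (reachDD wmax ρ p θ₀ t) / ENNReal.ofReal (t ^ 3))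
      (𝓝[>] 0) ≤ ENNReal.ofReal (5 / (6 * ρ) * wmax ^ 3) := by
  apply Filter.limsup_le_of_le (by isBoundedDefault)
  apply eventually_nhdsWithin_of_forall
  intro t ht
  rw [Set.mem_Ioi] at ht
  have h1 := DDHelp.volume_reach_le wmax ρ hw hρ p θ₀ ht
  have h2 : ENNReal.ofReal (5 / (6 * ρ) * (wmax * t) ^ 3)
      = ENNReal.ofReal (5 / (6 * ρ) * wmax ^ 3) * ENNReal.ofReal (t ^ 3) := by
    rw [← ENNReal.ofReal_mul (by positivity)]
    congr 1
    ring
  exact ENNReal.div_le_of_le_mul (le_trans h1 (le_of_eq h2))
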